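/- If a graph G contains a bipartite subgraph with bipartition (A, B) such that |A| = λ for some cardinal λ ≥ μ, |B| = λ⁺, and every vertex of B has at least μ neighbours in A, then G does not admit a well-ordering of its vertices in which every vertex has fewer than μ neighbours preceding it (i.e., col(G) > μ). -/

import Mathlib

open Cardinal

universe u v

/-- A well-ordering of the vertices of `G` in which every vertex has
fewer than `μ` neighbours preceding it (a *good* well-ordering for `μ`). -/
def HasGoodOrder {V : Type u} (G : SimpleGraph V) (μ : Cardinal.{u}) : Prop :=
  ∃ r : V → V → Prop, IsWellOrder V r ∧ ∀ v : V, #{w : V | G.Adj v w ∧ r w v} < μ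

/-- The colouring number of `G`: the least cardinal `κ` admitting a
well-ordering of the vertices in which each vertex has fewer than `κ`
earlier neighbours. -/
noncomputable def col {V : Type u} (G : SimpleGraph V) : Cardinal.{u} :=
  sInf {μ : Cardinal.{u} | HasGoodOrder G μ}

/-- `X` is robust (for `μ`): every vertex outside `X` has fewer than `μ`
neighbours inside `X`. -/
def Robust {V : Type u} (G : SimpleGraph V) (μ : Cardinal.{u}) (X : Set V) : Prop :=
  ∀ v ∉ X, #(G.neighborSet v ∩ X : Set V) < μ

/-- `G` contains a `μ`-barricade as a subgraph: disjoint vertex sets `A`, `B`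
with `|A| < |B|` such that every vertex of `B` has at least `μ` neighbours in `A`. -/
def HasBarricade {V : Type u} (G : SimpleGraph V) (μ : Cardinal.{u}) : Prop :=
  ∃ A B : Set V, Disjoint A B ∧ #A < #B ∧
    ∀ b ∈ B, μ ≤ #(G.neighborSet b ∩ A : Set V)

/-- `G` contains a `μ`-obstruction of type I as a subgraph: disjoint sets `A`, `B`
with `|A| = λ ≥ μ`, `|B| = λ⁺`, every vertex of `B` having at least `μ`
neighbours in `A` and every vertex of `A` having `λ⁺` neighbours in `B`. -/
def HasTypeIObstruction {V : Type u} (G : SimpleGraph V) (μ : Cardinal.{u}) : Prop :=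
  ∃ (A B : Set V) (lam : Cardinal.{u}), Disjoint A B ∧ μ ≤ lam ∧
    #A = lam ∧ #B = Order.succ lam ∧
    (∀ b ∈ B, μ ≤ #(G.neighborSet b ∩ A : Set V)) ∧
    (∀ a ∈ A, #(G.neighborSet a ∩ B : Set V) = Order.succ lam)

/-- `G` itself is a `μ`-obstruction of type I: a bipartite graph with
bipartition `(A, B)` satisfying the type I conditions. -/
def IsTypeIObstruction {V : Type u} (G : SimpleGraph V) (μ : Cardinal.{u}) : Prop :=
  ∃ (A B : Set V) (lam : Cardinal.{u}), Disjoint A B ∧ A ∪ B = Set.univ ∧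
    (∀ a b, G.Adj a b → (a ∈ A ∧ b ∈ B) ∨ (a ∈ B ∧ b ∈ A)) ∧
    μ ≤ lam ∧ #A = lam ∧ #B = Order.succ lam ∧
    (∀ b ∈ B, μ ≤ #(G.neighborSet b ∩ A : Set V)) ∧
    (∀ a ∈ A, #(G.neighborSet a ∩ B : Set V) = Order.succ lam)

/-- `C` is closed and unbounded in the ordinal `o`. -/
def IsClubIn (C : Set Ordinal.{v}) (o : Ordinal.{v}) : Prop :=
  (∀ a < o, ∃ b ∈ C, a ≤ b ∧ b < o) ∧
  (∀ a < o, a ≠ 0 → sSup (C ∩ Set.Iio a) = a → a ∈ C)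

/-- `S` is stationary in the ordinal `o`: it meets every club subset of `o`. -/
def IsStationaryIn (S : Set Ordinal.{v}) (o : Ordinal.{v}) : Prop :=
  ∀ C : Set Ordinal.{v}, IsClubIn C o → (S ∩ C ∩ Set.Iio o).Nonempty

/-- The set `T_H` of vertices `α` (ordinals) with `cf α = cf μ`, whose set of
neighbours below `α` has order type `μ` and supremum `α`. -/
noncomputable def typeIITarget (H : SimpleGraph Ordinal.{v}) (μ : Cardinal.{v}) :
    Set Ordinal.{v} :=
  {α | α.cof = μ.ord.cof ∧
    Ordinal.type (Subrel ((· < ·) : Ordinal.{v} → Ordinal.{v} → Prop)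
      (· ∈ H.neighborSet α ∩ Set.Iio α)) = Ordinal.lift.{v + 1} μ.ord ∧
    sSup (H.neighborSet α ∩ Set.Iio α) = α}

/-- `H` is a `μ`-obstruction of type II with vertex set the regular cardinal
`κ > μ` (realised as the ordinals below `κ`): `T_H` is stationary in `κ`. -/
def IsTypeIIObstruction (H : SimpleGraph Ordinal.{v}) (μ κ : Cardinal.{v}) : Prop :=
  μ < κ ∧ κ.IsRegular ∧ (∀ a b, H.Adj a b → a < κ.ord ∧ b < κ.ord) ∧
  IsStationaryIn (typeIITarget H μ) κ.ord

/-- `G` contains a `μ`-obstruction of type II as a subgraph. -/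
def HasTypeIIObstruction {V : Type u} (G : SimpleGraph V) (μ : Cardinal.{v}) : Prop :=
  ∃ (κ : Cardinal.{v}) (H : SimpleGraph Ordinal.{v}) (f : Ordinal.{v} → V),
    Set.InjOn f (Set.Iio κ.ord) ∧ (∀ a b, H.Adj a b → G.Adj (f a) (f b)) ∧
    IsTypeIIObstruction H μ κ

/-- `G` contains a complete subgraph on `μ` vertices. -/
def HasCompleteSubgraph {V : Type u} (G : SimpleGraph V) (μ : Cardinal.{u}) : Prop :=
  ∃ S : Set V, #S = μ ∧ S.Pairwise G.Adj

/-- `G` contains an induced copy of the complete bipartite graph `K_{k,ω}`. -/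
def HasInducedKkOmega {V : Type u} (G : SimpleGraph V) (k : ℕ) : Prop :=
  ∃ A B : Set V, Disjoint A B ∧ #A = (k : Cardinal.{u}) ∧ #B = ℵ₀ ∧
    (∀ a ∈ A, ∀ b ∈ B, G.Adj a b) ∧
    (∀ a ∈ A, ∀ a' ∈ A, a ≠ a' → ¬ G.Adj a a') ∧
    (∀ b ∈ B, ∀ b' ∈ B, b ≠ b' → ¬ G.Adj b b')

/-- a type I obstruction-like configuration (sets `A`, `B` with
`|A| = λ ≥ μ`, `|B| = λ⁺`, each vertex of `B` having `≥ μ` neighbours in `A`)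
forces `col(G) > μ`: there is no good well-ordering for `μ`. -/
theorem stmt0 {V : Type u} (G : SimpleGraph V) (μ : Cardinal.{u}) (hμ : ℵ₀ ≤ μ)
    (A B : Set V) (lam : Cardinal.{u}) (hd : Disjoint A B) (hlam : μ ≤ lam)
    (hA : #A = lam) (hB : #B = Order.succ lam)
    (hdeg : ∀ b ∈ B, μ ≤ #(G.neighborSet b ∩ A : Set V)) :
    ¬ HasGoodOrder G μ ∧ μ < col G := by
  have key : ¬ HasGoodOrder G μ := by
    rintro ⟨r, hwo, hsmall⟩
    have hchoice : ∀ b : B, ∃ a : A, G.Adj (b : V) (a : V) ∧ r (b : V) (a : V) := by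
      rintro ⟨b, hb⟩
      by_contra h
      push_neg at h
      have hsub : (G.neighborSet b ∩ A : Set V) ⊆ {w : V | G.Adj b w ∧ r w b} := by
        rintro w ⟨hadj, hwA⟩
        have hnb : w ∉ B := Set.disjoint_left.mp hd hwA
        rcases (haveI := hwo; trichotomous_of r w b) with hr | he | hr
        · exact ⟨hadj, hr⟩
        · exact absurd (he ▸ hb) hnb
        · exact absurd hr (h ⟨w, hwA⟩ hadj)
      have h1 : μ ≤ #{w : V | G.Adj b w ∧ r w b} :=
        (hdeg b hb).trans (Cardinal.mk_le_mk_of_subset hsub)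
      exact absurd h1 (not_le.mpr (hsmall b))
    choose f hf1 hf2 using hchoice
    have hfib : ∀ a : A, #(f ⁻¹' {a}) ≤ lam := by
      intro a
      have hle : #(f ⁻¹' {a}) ≤ #{w : V | G.Adj (a : V) w ∧ r w (a : V)} := by
        refine Cardinal.mk_le_of_injective (f := fun b =>
          ⟨(b.1 : V), ?_, ?_⟩) ?_
        · have := hf1 b.1
          rw [b.2] at this
          exact this.symm
        · have := hf2 b.1
          rw [b.2] at this
          exact this
        · intro x y hxy
          simp only [Subtype.mk.injEq] at hxy
          exact Subtype.ext (Subtype.ext hxy)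
      have hlt : #{w : V | G.Adj (a : V) w ∧ r w (a : V)} < μ := hsmall a
      exact (hle.trans hlt.le).trans hlam
    have hmul := Cardinal.mk_le_mk_mul_of_mk_preimage_le f hfib
    rw [hB, hA] at hmul
    have hlaminf : ℵ₀ ≤ lam := hμ.trans hlam
    rw [Cardinal.mul_eq_self hlaminf] at hmul
    exact absurd hmul (not_le.mpr (Order.lt_succ lam))
  refine ⟨key, ?_⟩
  have hne : {ν : Cardinal.{u} | HasGoodOrder G ν}.Nonempty := by
    refine ⟨Order.succ #V, WellOrderingRel, WellOrderingRel.isWellOrder, fun v => ?_⟩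
    exact lt_of_le_of_lt (Cardinal.mk_set_le _) (Order.lt_succ _)
  have hmem : col G ∈ {ν : Cardinal.{u} | HasGoodOrder G ν} := csInf_mem hne
  by_contra hle
  push_neg at hle
  obtain ⟨r, hwo, hsmall⟩ := hmem
  exact key ⟨r, hwo, fun v => lt_of_lt_of_le (hsmall v) hle⟩
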